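/- arXiv:1611.06341 — 3 statements merged into one kernel-verified Lean document; each statement's English description precedes it below -/
import Mathlib

section
/- Let (f_t)_{t∈[0,T]} ∈ L^∞([0,T],𝒫₁(ℝ^d)) be a weak solution of the Fokker–Planck equation. There exists a constant C > 0 such that for all ε ∈ (0,1), all y ∈ ℝ^d and all t ∈ [0,T]: |b^ε(t,y)| + |a^ε(t,y)|^{1/2} + ∫_{ℝ^d} ∫_E |h(t,z,x)| F_t^ε(x,y) μ(dz) f_t(dx) ≤ C(1+|y|). -/
open MeasureTheory Real Set Filter Matrix
open scoped BigOperators ENNReal Topology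

noncomputable section

attribute [local instance] Matrix.normedAddCommGroup Matrix.normedSpace

abbrev Vec (d : ℕ) : Type := EuclideanSpace ℝ (Fin d)

variable {d : ℕ} {E : Type*} [MeasurableSpace E]

/-- The diffusion operator `𝒜_s φ(x) = b(s,x)·∇φ(x) + (1/2) Σ_{i,j} a_{ij}(s,x) ∂²_{ij} φ(x)`. -/
def opA (b : ℝ → Vec d → Vec d) (a : ℝ → Vec d → Matrix (Fin d) (Fin d) ℝ)
    (s : ℝ) (φ : Vec d → ℝ) (x : Vec d) : ℝ :=
  (inner ℝ (b s x) (gradient φ x) : ℝ)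
    + (1/2) * ∑ i : Fin d, ∑ j : Fin d, a s x i j *
        (iteratedFDeriv ℝ 2 φ x ![EuclideanSpace.single i 1, EuclideanSpace.single j 1])

/-- The jump operator `ℬ_s φ(x) = ∫_E (φ(x + h(s,z,x)) - φ(x)) μ(dz)`. -/
def opB (μ : Measure E) (h : ℝ → E → Vec d → Vec d) (s : ℝ) (φ : Vec d → ℝ) (x : Vec d) : ℝ :=
  ∫ z, (φ (x + h s z x) - φ x) ∂μ

/-- The growth assumption: `|σ(t,x)| + |b(t,x)| + ∫_E |h(t,z,x)| μ(dz) ≤ C₀ (1+|x|)`. -/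
def GrowthCond (T : ℝ) (μ : Measure E) (σ : ℝ → Vec d → Matrix (Fin d) (Fin d) ℝ)
    (b : ℝ → Vec d → Vec d) (h : ℝ → E → Vec d → Vec d) (C₀ : ℝ) : Prop :=
  ∀ t ∈ Icc (0:ℝ) T, ∀ x : Vec d, ‖σ t x‖ + ‖b t x‖ + (∫ z, ‖h t z x‖ ∂μ) ≤ C₀ * (1 + ‖x‖)

/-- `(f_t)` is a measurable family of measures, for `t ∈ [0,T]`. -/
def MeasFamily (T : ℝ) (f : ℝ → Measure (Vec d)) : Prop :=
  ∀ s : Set (Vec d), MeasurableSet s → Measurable fun t : Icc (0:ℝ) T => f t s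

/-- `(f_t)_{t ∈ [0,T]}` is a weak solution of the Fokker-Planck equation
`∂_t f = -div(b f) + (1/2) Σ ∂_{ij}(a_{ij} f) + ℒ f`. -/
def IsWeakSol (T : ℝ) (μ : Measure E) (b : ℝ → Vec d → Vec d)
    (a : ℝ → Vec d → Matrix (Fin d) (Fin d) ℝ) (h : ℝ → E → Vec d → Vec d)
    (f : ℝ → Measure (Vec d)) : Prop :=
  MeasFamily T f ∧ (∀ t ∈ Icc (0:ℝ) T, IsProbabilityMeasure (f t)) ∧
  ∀ φ : Vec d → ℝ, ContDiff ℝ 2 φ → HasCompactSupport φ → ∀ t ∈ Icc (0:ℝ) T,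
    ∫ x, φ x ∂(f t) = (∫ x, φ x ∂(f 0))
      + ∫ s in (0:ℝ)..t, ∫ x, (opA b a s φ x + opB μ h s φ x) ∂(f s)

/-- Uniformly bounded first moments: `(f_t) ∈ L^∞([0,T], 𝒫₁(ℝ^d))`. -/
def FinFirstMoments (T : ℝ) (f : ℝ → Measure (Vec d)) : Prop :=
  ∃ M : ℝ, ∀ t ∈ Icc (0:ℝ) T, ∫⁻ x, ‖x‖₊ ∂(f t) ≤ ENNReal.ofReal M

/-- The centered Gaussian density with covariance `ε Id`. -/
def gauss (d : ℕ) (ε : ℝ) (x : Vec d) : ℝ :=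
  (2 * π * ε) ^ (-(d:ℝ)/2) * Real.exp (-‖x‖^2 / (2*ε))

/-- `f_t^ε(y) = (f_t ⋆ φ_ε)(y)`. -/
def freg (f : ℝ → Measure (Vec d)) (ε t : ℝ) (y : Vec d) : ℝ :=
  ∫ x, gauss d ε (x - y) ∂(f t)

/-- `a^ε(t,y) = (f_t^ε(y))⁻¹ ∫ φ_ε(x-y) a(t,x) f_t(dx)`. -/
def areg (f : ℝ → Measure (Vec d)) (a : ℝ → Vec d → Matrix (Fin d) (Fin d) ℝ)
    (ε t : ℝ) (y : Vec d) : Matrix (Fin d) (Fin d) ℝ :=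
  Matrix.of fun i j => (freg f ε t y)⁻¹ * ∫ x, gauss d ε (x - y) * a t x i j ∂(f t)

/-- `b^ε(t,y) = (f_t^ε(y))⁻¹ ∫ φ_ε(x-y) b(t,x) f_t(dx)`. -/
def breg (f : ℝ → Measure (Vec d)) (b : ℝ → Vec d → Vec d) (ε t : ℝ) (y : Vec d) : Vec d :=
  (freg f ε t y)⁻¹ • ∫ x, gauss d ε (x - y) • b t x ∂(f t)

/-- `F_t^ε(x,y) = φ_ε(x-y) / f_t^ε(y)`. -/
def Freg (f : ℝ → Measure (Vec d)) (ε t : ℝ) (x y : Vec d) : ℝ :=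
  gauss d ε (x - y) / freg f ε t y

/-- The regularized jump operator `ℬ_{t,ε}`. -/
def opBreg (μ : Measure E) (h : ℝ → E → Vec d → Vec d) (f : ℝ → Measure (Vec d))
    (ε t : ℝ) (ψ : Vec d → ℝ) (y : Vec d) : ℝ :=
  ∫ z, ∫ x, (ψ (y + h t z x) - ψ y) * Freg f ε t x y ∂(f t) ∂μ


/-- Entrywise measurability of a matrix-valued coefficient. -/
def MeasurableMat {d : ℕ} (σ : ℝ → Vec d → Matrix (Fin d) (Fin d) ℝ) : Prop :=
  ∀ i j : Fin d, Measurable fun p : ℝ × Vec d => σ p.1 p.2 i j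

namespace Stmt4Aux

lemma gauss_eq (d : ℕ) (ε : ℝ) (u : Vec d) :
    gauss d ε u = (2 * π * ε) ^ (-(d:ℝ)/2) * Real.exp (-‖u‖^2 / (2*ε)) := rfl

lemma cst_pos {ε : ℝ} (hε : 0 < ε) : (0:ℝ) < (2 * π * ε) ^ (-(d:ℝ)/2) :=
  Real.rpow_pos_of_pos (by positivity) _

lemma gauss_pos {ε : ℝ} (hε : 0 < ε) (u : Vec d) : 0 < gauss d ε u :=
  mul_pos (cst_pos hε) (Real.exp_pos _)

lemma gauss_le {ε : ℝ} (hε : 0 < ε) (u : Vec d) :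
    gauss d ε u ≤ (2 * π * ε) ^ (-(d:ℝ)/2) := by
  rw [gauss_eq]
  have h1 : Real.exp (-‖u‖^2 / (2*ε)) ≤ 1 := by
    rw [Real.exp_le_one_iff]
    have : (0:ℝ) ≤ ‖u‖^2 / (2*ε) := by positivity
    linarith [neg_div (2*ε) (‖u‖^2)]
  nlinarith [cst_pos (d := d) hε]

lemma gauss_continuous (d : ℕ) (ε : ℝ) : Continuous (gauss d ε) := by
  unfold gauss
  exact continuous_const.mul (Real.continuous_exp.comp
    (((continuous_norm.pow 2).neg).div_const _))

lemma gauss_mono {ε : ℝ} (hε : 0 < ε) {u : Vec d} {s : ℝ} (hus : ‖u‖ ≤ s) :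
    (2 * π * ε) ^ (-(d:ℝ)/2) * Real.exp (-s^2 / (2*ε)) ≤ gauss d ε u := by
  rw [gauss_eq]
  have h2 : -s^2 / (2*ε) ≤ -‖u‖^2 / (2*ε) := by
    apply div_le_div_of_nonneg_right _ (by linarith) |>.trans_eq rfl
    nlinarith [norm_nonneg u]
  exact mul_le_mul_of_nonneg_left (Real.exp_le_exp.2 h2) (cst_pos hε).le

lemma exp_quarter_mul_pow_le {ε : ℝ} (hε : ε ∈ Ioo (0:ℝ) 1) {r : ℝ} (hr : 0 ≤ r)
    {p : ℕ} (hp : p = 1 ∨ p = 2) : Real.exp (-r^2 / (4*ε)) * r^p ≤ 4 := by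
  obtain ⟨hε0, hε1⟩ := hε
  have h1 : Real.exp (-r^2 / (4*ε)) ≤ Real.exp (-r^2 / 4) := by
    apply Real.exp_le_exp.2
    rw [div_le_div_iff₀ (by linarith) (by norm_num)]
    nlinarith
  have h2 : r^p ≤ 4 * Real.exp (r^2/4) := by
    have he := Real.add_one_le_exp (r^2/4)
    rcases hp with hp | hp <;> subst hp <;> nlinarith
  have h3 : Real.exp (-r^2/4) * Real.exp (r^2/4) = 1 := by
    rw [← Real.exp_add]; ring_nf; exact Real.exp_zero
  have h4 : 0 ≤ r^p := by positivity
  nlinarith [Real.exp_pos (-r^2/4), Real.exp_pos (-r^2/(4*ε)),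
    mul_le_mul_of_nonneg_left h2 (Real.exp_pos (-r^2/4)).le,
    mul_le_mul_of_nonneg_right h1 h4]

lemma gauss_mul_pow_le {ε : ℝ} (hε : ε ∈ Ioo (0:ℝ) 1) {A : ℝ} (hA : 0 ≤ A) (u : Vec d)
    {p : ℕ} (hp : p = 1 ∨ p = 2) :
    gauss d ε u * ‖u‖^p ≤ A^p * gauss d ε u
      + 4 * ((2 * π * ε) ^ (-(d:ℝ)/2) * Real.exp (-A^2 / (4*ε))) := by
  have hε0 := hε.1
  have hc := cst_pos (d := d) hε0
  rcases le_or_gt ‖u‖ A with hu | hu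
  · have : gauss d ε u * ‖u‖^p ≤ gauss d ε u * A^p :=
      mul_le_mul_of_nonneg_left (pow_le_pow_left₀ (norm_nonneg u) hu p) (gauss_pos hε0 u).le
    have h2 : 0 ≤ Real.exp (-A^2/(4*ε)) := (Real.exp_pos _).le
    nlinarith
  · have key : Real.exp (-‖u‖^2 / (2*ε)) = Real.exp (-‖u‖^2 / (4*ε)) * Real.exp (-‖u‖^2 / (4*ε)) := by
      rw [← Real.exp_add]; congr 1; field_simp; ring
    have h1 : Real.exp (-‖u‖^2 / (4*ε)) ≤ Real.exp (-A^2 / (4*ε)) := by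
      apply Real.exp_le_exp.2
      have : A^2 ≤ ‖u‖^2 := by nlinarith
      have h4 : (0:ℝ) < 4*ε := by linarith [hε.1]
      rw [div_le_div_iff₀ h4 h4]; nlinarith
    have h2 : Real.exp (-‖u‖^2 / (4*ε)) * ‖u‖^p ≤ 4 :=
      exp_quarter_mul_pow_le hε (norm_nonneg u) hp
    have h3 : gauss d ε u * ‖u‖^p ≤ (2 * π * ε) ^ (-(d:ℝ)/2) * (Real.exp (-A^2/(4*ε)) * 4) := by
      rw [gauss_eq, key]
      have e1 : (2 * π * ε) ^ (-(d:ℝ)/2) * (Real.exp (-‖u‖^2/(4*ε)) * Real.exp (-‖u‖^2/(4*ε))) * ‖u‖^p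
          = (2 * π * ε) ^ (-(d:ℝ)/2) * (Real.exp (-‖u‖^2/(4*ε)) * (Real.exp (-‖u‖^2/(4*ε)) * ‖u‖^p)) := by
        ring
      rw [e1]
      apply mul_le_mul_of_nonneg_left _ hc.le
      exact mul_le_mul h1 h2 (by positivity) (Real.exp_pos _).le
    have h5 : 0 ≤ A^p * gauss d ε u := mul_nonneg (by positivity) (gauss_pos hε0 u).le
    nlinarith
  
lemma one_add_pow_le {a b : ℝ} (ha : 0 ≤ a) (hb : 0 ≤ b) {p : ℕ} (hp : p = 1 ∨ p = 2) :
    (a + b)^p ≤ 2^p * a^p + 2^p * b^p := by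
  rcases hp with hp | hp <;> subst hp <;> nlinarith

lemma one_le_pow {a : ℝ} (ha : 1 ≤ a) (p : ℕ) : 1 ≤ a^p := one_le_pow₀ ha

lemma norm_le_split (y x : Vec d) : 1 + ‖x‖ ≤ (1 + ‖y‖) + ‖x - y‖ := by
  have : ‖x‖ ≤ ‖y‖ + ‖x - y‖ := by
    calc ‖x‖ = ‖y + (x - y)‖ := by rw [add_sub_cancel]
    _ ≤ ‖y‖ + ‖x - y‖ := norm_add_le _ _
  linarith

lemma pow_split {ε : ℝ} (hε : ε ∈ Ioo (0:ℝ) 1) (y x : Vec d) {p : ℕ} (hp : p = 1 ∨ p = 2) :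
    gauss d ε (x - y) * (1 + ‖x‖)^p
      ≤ 2^p * (1 + ‖y‖)^p * gauss d ε (x - y) + 2^p * (gauss d ε (x - y) * ‖x - y‖^p) := by
  have hg := (gauss_pos (d := d) hε.1 (x - y)).le
  have h1 : (1 + ‖x‖)^p ≤ ((1 + ‖y‖) + ‖x - y‖)^p := by
    apply pow_le_pow_left₀ (by positivity) (norm_le_split y x)
  have h2 := one_add_pow_le (a := 1 + ‖y‖) (b := ‖x - y‖) (by positivity) (norm_nonneg _) hp
  have h3 : gauss d ε (x - y) * (1 + ‖x‖)^p
      ≤ gauss d ε (x - y) * (2^p * (1 + ‖y‖)^p + 2^p * ‖x - y‖^p) :=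
    mul_le_mul_of_nonneg_left (h1.trans h2) hg
  nlinarith

lemma integrable_gauss {ε : ℝ} (hε : 0 < ε) (y : Vec d) (ν : Measure (Vec d))
    [IsFiniteMeasure ν] : Integrable (fun x => gauss d ε (x - y)) ν := by
  apply Integrable.mono' (integrable_const ((2 * π * ε) ^ (-(d:ℝ)/2))) _ _
  · exact ((gauss_continuous d ε).comp (continuous_id.sub continuous_const)).aestronglyMeasurable
  · filter_upwards with x
    rw [Real.norm_eq_abs, abs_of_nonneg (gauss_pos hε _).le]
    exact gauss_le hε _

lemma integrable_gauss_pow {ε : ℝ} (hε : ε ∈ Ioo (0:ℝ) 1) (y : Vec d) {p : ℕ}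
    (hp : p = 1 ∨ p = 2) (ν : Measure (Vec d)) [IsFiniteMeasure ν] :
    Integrable (fun x => gauss d ε (x - y) * (1 + ‖x‖)^p) ν := by
  have hε0 := hε.1
  have hc := cst_pos (d := d) hε0
  set cc := (2 * π * ε) ^ (-(d:ℝ)/2) with hcc
  apply Integrable.mono' (integrable_const (2^p * (1 + ‖y‖)^p * cc + 2^p * (4 * cc))) _ _
  · apply Continuous.aestronglyMeasurable
    exact ((gauss_continuous d ε).comp (continuous_id.sub continuous_const)).mul
      ((continuous_const.add continuous_norm).pow p)
  · filter_upwards with x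
    have h0 : 0 ≤ gauss d ε (x - y) * (1 + ‖x‖)^p :=
      mul_nonneg (gauss_pos hε0 _).le (by positivity)
    rw [Real.norm_eq_abs, abs_of_nonneg h0]
    have h1 := pow_split hε y x hp
    have h2 : gauss d ε (x - y) ≤ cc := gauss_le hε0 _
    have h3 : gauss d ε (x - y) * ‖x - y‖^p ≤ 4 * cc := by
      have := gauss_mul_pow_le (d := d) hε le_rfl (x - y) hp
      have hz : (0:ℝ)^p = 0 := by rcases hp with hp | hp <;> subst hp <;> norm_num
      rw [hz] at this
      simpa [hcc] using this.trans (by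
        have : Real.exp (-(0:ℝ)^2 / (4*ε)) = 1 := by norm_num
        rw [this]; ring_nf; exact le_rfl)
    have h4 : 2^p * (1 + ‖y‖)^p * gauss d ε (x - y) ≤ 2^p * (1 + ‖y‖)^p * cc :=
      mul_le_mul_of_nonneg_left h2 (by positivity)
    have h5 : (2:ℝ)^p * (gauss d ε (x - y) * ‖x - y‖^p) ≤ 2^p * (4 * cc) :=
      mul_le_mul_of_nonneg_left h3 (by positivity)
    linarith

lemma meas_closedBall_half {M : ℝ} (hM : 0 ≤ M) (ν : Measure (Vec d))
    [IsProbabilityMeasure ν] (hmom : ∫⁻ x, ‖x‖₊ ∂ν ≤ ENNReal.ofReal M) :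
    (1:ℝ)/2 ≤ (ν (Metric.closedBall 0 (2*M+2))).toReal := by
  set R : ℝ := 2*M+2 with hR
  have hRpos : 0 < R := by positivity
  have hint : Integrable (fun x : Vec d => ‖x‖) ν := by
    refine ⟨continuous_norm.aestronglyMeasurable, ?_⟩
    have hlt : (∫⁻ x, ‖x‖₊ ∂ν) < ⊤ := hmom.trans_lt ENNReal.ofReal_lt_top
    simpa [MeasureTheory.HasFiniteIntegral, ← enorm_eq_nnnorm] using hlt
  have hIM : ∫ x, ‖x‖ ∂ν ≤ M := by
    rw [MeasureTheory.integral_eq_lintegral_of_nonneg_ae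
      (Eventually.of_forall fun x => norm_nonneg x) continuous_norm.aestronglyMeasurable]
    have : ∫⁻ x, ENNReal.ofReal ‖x‖ ∂ν ≤ ENNReal.ofReal M := by
      simpa [ofReal_norm, ← enorm_eq_nnnorm] using hmom
    calc (∫⁻ x, ENNReal.ofReal ‖x‖ ∂ν).toReal ≤ (ENNReal.ofReal M).toReal :=
        ENNReal.toReal_mono ENNReal.ofReal_ne_top this
    _ = M := ENNReal.toReal_ofReal hM
  set s : Set (Vec d) := Metric.closedBall 0 R with hs
  have hsm : MeasurableSet s := Metric.isClosed_closedBall.measurableSet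
  have hmarkov : R * (ν sᶜ).toReal ≤ M := by
    have hind : ∫ x, sᶜ.indicator (fun _ => R) x ∂ν ≤ ∫ x, ‖x‖ ∂ν := by
      apply integral_mono_of_nonneg _ hint _
      · filter_upwards with x
        exact Set.indicator_nonneg (fun _ _ => hRpos.le) x
      · filter_upwards with x
        by_cases hx : x ∈ sᶜ
        · rw [Set.indicator_of_mem hx]
          simp only [hs, Set.mem_compl_iff, Metric.mem_closedBall, dist_zero_right, not_le] at hx
          exact hx.le
        · rw [Set.indicator_of_notMem hx]; exact norm_nonneg x
    rw [MeasureTheory.integral_indicator_const _ hsm.compl] at hind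
    simp only [smul_eq_mul, measureReal_def] at hind
    linarith
  have hcompl : (ν sᶜ).toReal = 1 - (ν s).toReal := by
    rw [MeasureTheory.prob_compl_eq_one_sub hsm]
    rw [ENNReal.toReal_sub_of_le prob_le_one (by norm_num)]
    simp
  have h2 : (ν sᶜ).toReal ≤ 1/2 := by
    by_contra hcon
    push_neg at hcon
    nlinarith
  linarith [hcompl ▸ h2]

lemma freg_lower {M : ℝ} (hM : 0 ≤ M) (ν : Measure (Vec d)) [IsProbabilityMeasure ν]
    (hmom : ∫⁻ x, ‖x‖₊ ∂ν ≤ ENNReal.ofReal M) {ε : ℝ} (hε : 0 < ε) (y : Vec d) :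
    (2 * π * ε) ^ (-(d:ℝ)/2) * Real.exp (-(‖y‖ + (2*M+2))^2 / (2*ε))
      ≤ 2 * ∫ x, gauss d ε (x - y) ∂ν := by
  set R : ℝ := 2*M+2 with hR
  set κ : ℝ := (2 * π * ε) ^ (-(d:ℝ)/2) * Real.exp (-(‖y‖ + R)^2 / (2*ε)) with hκ
  have hκpos : 0 < κ := mul_pos (cst_pos hε) (Real.exp_pos _)
  set s : Set (Vec d) := Metric.closedBall 0 R with hs
  have hsm : MeasurableSet s := Metric.isClosed_closedBall.measurableSet
  have hind : ∫ x, s.indicator (fun _ => κ) x ∂ν ≤ ∫ x, gauss d ε (x - y) ∂ν := by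
    apply integral_mono_of_nonneg _ (integrable_gauss hε y ν) _
    · filter_upwards with x
      exact Set.indicator_nonneg (fun _ _ => hκpos.le) x
    · filter_upwards with x
      by_cases hx : x ∈ s
      · rw [Set.indicator_of_mem hx]
        apply gauss_mono hε
        simp only [hs, Metric.mem_closedBall, dist_zero_right] at hx
        calc ‖x - y‖ ≤ ‖x‖ + ‖y‖ := norm_sub_le _ _
        _ ≤ ‖y‖ + R := by linarith
      · rw [Set.indicator_of_notMem hx]
        exact (gauss_pos hε _).le
  rw [MeasureTheory.integral_indicator_const _ hsm] at hind
  simp only [smul_eq_mul, measureReal_def] at hind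
  have hhalf := meas_closedBall_half hM ν hmom
  nlinarith

set_option maxHeartbeats 1000000 in
lemma key_estimate {M : ℝ} (hM : 0 ≤ M) (ν : Measure (Vec d)) [IsProbabilityMeasure ν]
    (hmom : ∫⁻ x, ‖x‖₊ ∂ν ≤ ENNReal.ofReal M) {ε : ℝ} (hε : ε ∈ Ioo (0:ℝ) 1) (y : Vec d)
    {p : ℕ} (hp : p = 1 ∨ p = 2) :
    ∫ x, gauss d ε (x - y) * (1 + ‖x‖)^p ∂ν
      ≤ (4*(9 + 2*(3 + 2*M)^2)) * (1 + ‖y‖)^p * ∫ x, gauss d ε (x - y) ∂ν := by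
  have hε0 := hε.1
  set cc := (2 * π * ε) ^ (-(d:ℝ)/2) with hcc
  have hccpos : 0 < cc := cst_pos hε0
  set R : ℝ := 2*M+2 with hR
  set A : ℝ := Real.sqrt 2 * (‖y‖ + R) with hA
  have hRpos : 0 < R := by positivity
  have hApos : 0 ≤ A := by positivity
  set G : ℝ := ∫ x, gauss d ε (x - y) ∂ν with hG
  have hGpos : 0 < G := by
    have := freg_lower hM ν hmom hε0 y
    have hκ : 0 < (2 * π * ε) ^ (-(d:ℝ)/2) * Real.exp (-(‖y‖ + (2*M+2))^2 / (2*ε)) :=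
      mul_pos (cst_pos hε0) (Real.exp_pos _)
    linarith
  -- pointwise bound
  have hpt : ∀ x, gauss d ε (x - y) * (1 + ‖x‖)^p
      ≤ (2^p * (1 + ‖y‖)^p + 2^p * A^p) * gauss d ε (x - y)
        + 2^p * (4 * (cc * Real.exp (-A^2 / (4*ε)))) := by
    intro x
    have h1 := pow_split hε y x hp
    have h2 := gauss_mul_pow_le (d := d) hε hApos (x - y) hp
    have h3 : (2:ℝ)^p * (gauss d ε (x - y) * ‖x - y‖^p)
        ≤ 2^p * (A^p * gauss d ε (x - y) + 4 * (cc * Real.exp (-A^2 / (4*ε)))) :=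
      mul_le_mul_of_nonneg_left h2 (by positivity)
    nlinarith
  -- integrate
  have hstep : ∫ x, gauss d ε (x - y) * (1 + ‖x‖)^p ∂ν
      ≤ (2^p * (1 + ‖y‖)^p + 2^p * A^p) * G + 2^p * (4 * (cc * Real.exp (-A^2 / (4*ε)))) := by
    have hgi : Integrable (fun x => (2^p * (1 + ‖y‖)^p + 2^p * A^p) * gauss d ε (x - y)
        + 2^p * (4 * (cc * Real.exp (-A^2 / (4*ε))))) ν :=
      ((integrable_gauss hε0 y ν).const_mul _).add (integrable_const _)
    have := integral_mono_of_nonneg (f := fun x => gauss d ε (x - y) * (1 + ‖x‖)^p)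
      (Eventually.of_forall fun x => mul_nonneg (gauss_pos hε0 _).le (by positivity))
      hgi (Eventually.of_forall hpt)
    rw [MeasureTheory.integral_add ((integrable_gauss hε0 y ν).const_mul _)
      (integrable_const _), MeasureTheory.integral_const_mul, integral_const] at this
    simpa using this
  -- bound the constant term using the lower bound
  have hsq2 : Real.sqrt 2 ^ 2 = 2 := Real.sq_sqrt (by norm_num)
  have hexp : cc * Real.exp (-A^2 / (4*ε)) ≤ 2 * G := by
    have hA2 : A^2 = 2 * (‖y‖ + R)^2 := by
      rw [hA, mul_pow, hsq2]
    have heq : -A^2 / (4*ε) = -(‖y‖ + R)^2 / (2*ε) := by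
      rw [hA2]; ring
    rw [heq, hG, hcc, hR]
    exact freg_lower hM ν hmom hε0 y
  have hyR : ‖y‖ + R ≤ (1 + R) * (1 + ‖y‖) := by nlinarith [norm_nonneg y]
  have hApow : A^p ≤ 2 * (1 + R)^2 * (1 + ‖y‖)^p := by
    have hs2 : Real.sqrt 2 ≤ 2 := by nlinarith [Real.sqrt_nonneg 2]
    rcases hp with hp | hp <;> subst hp
    · have : A ≤ 2 * ((1 + R) * (1 + ‖y‖)) := by
        calc A ≤ Real.sqrt 2 * ((1 + R) * (1 + ‖y‖)) :=
            mul_le_mul_of_nonneg_left hyR (Real.sqrt_nonneg 2)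
        _ ≤ 2 * ((1 + R) * (1 + ‖y‖)) := by
            apply mul_le_mul_of_nonneg_right hs2; nlinarith [norm_nonneg y]
      nlinarith [norm_nonneg y]
    · have hA2 : A^2 = 2 * (‖y‖ + R)^2 := by rw [hA, mul_pow, hsq2]
      rw [hA2]
      nlinarith [norm_nonneg y]
  have h2p : (2:ℝ)^p ≤ 4 := by rcases hp with hp | hp <;> subst hp <;> norm_num
  have hyp1 : (1:ℝ) ≤ (1 + ‖y‖)^p := one_le_pow₀ (by linarith [norm_nonneg y])
  have h2ppos : (0:ℝ) < 2^p := by positivity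
  have hRe : (3 + 2*M) = 1 + R := by rw [hR]; ring
  have hcoef : 2^p * (1 + ‖y‖)^p + 2^p * A^p + 2^p * 8
      ≤ (4*(9 + 2*(3 + 2*M)^2)) * (1 + ‖y‖)^p := by
    have t1 : (2:ℝ)^p * (1 + ‖y‖)^p ≤ 4 * (1 + ‖y‖)^p :=
      mul_le_mul_of_nonneg_right h2p (by positivity)
    have t2 : (2:ℝ)^p * A^p ≤ 4 * (2 * (1 + R)^2 * (1 + ‖y‖)^p) := by
      calc (2:ℝ)^p * A^p ≤ 2^p * (2 * (1 + R)^2 * (1 + ‖y‖)^p) :=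
          mul_le_mul_of_nonneg_left hApow h2ppos.le
      _ ≤ 4 * (2 * (1 + R)^2 * (1 + ‖y‖)^p) := by
          apply mul_le_mul_of_nonneg_right h2p; positivity
    have t3 : (2:ℝ)^p * 8 ≤ 32 * (1 + ‖y‖)^p := by nlinarith
    rw [hRe]
    nlinarith
  have hc2 : 2^p * (4 * (cc * Real.exp (-A^2 / (4*ε)))) ≤ 2^p * 8 * G := by
    have : 4 * (cc * Real.exp (-A^2 / (4*ε))) ≤ 8 * G := by linarith
    calc 2^p * (4 * (cc * Real.exp (-A^2 / (4*ε)))) ≤ 2^p * (8 * G) :=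
        mul_le_mul_of_nonneg_left this h2ppos.le
    _ = 2^p * 8 * G := by ring
  calc ∫ x, gauss d ε (x - y) * (1 + ‖x‖)^p ∂ν
      ≤ (2^p * (1 + ‖y‖)^p + 2^p * A^p) * G + 2^p * (4 * (cc * Real.exp (-A^2 / (4*ε)))) :=
        hstep
  _ ≤ (2^p * (1 + ‖y‖)^p + 2^p * A^p + 2^p * 8) * G := by nlinarith
  _ ≤ (4*(9 + 2*(3 + 2*M)^2)) * (1 + ‖y‖)^p * G :=
        mul_le_mul_of_nonneg_right hcoef hGpos.le

end Stmt4Aux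

set_option maxHeartbeats 2000000 in
/-- uniform linear growth bound for the regularized coefficients. -/
theorem stmt4 (T : ℝ) (hT : 0 < T) (μ : Measure E) [SigmaFinite μ]
    (σ : ℝ → Vec d → Matrix (Fin d) (Fin d) ℝ) (b : ℝ → Vec d → Vec d)
    (h : ℝ → E → Vec d → Vec d) (C₀ : ℝ)
    (hσmeas : MeasurableMat σ)
    (hbmeas : Measurable (Function.uncurry b))
    (hhmeas : Measurable fun p : ℝ × E × Vec d => h p.1 p.2.1 p.2.2)
    (hσpsd : ∀ t ∈ Icc (0:ℝ) T, ∀ x : Vec d, (σ t x).PosSemidef)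
    (hgrowth : GrowthCond T μ σ b h C₀)
    (f : ℝ → Measure (Vec d))
    (hf : IsWeakSol T μ b (fun t x => σ t x * (σ t x)ᵀ) h f)
    (hfm : FinFirstMoments T f) :
    ∃ C > (0:ℝ), ∀ ε ∈ Ioo (0:ℝ) 1, ∀ y : Vec d, ∀ t ∈ Icc (0:ℝ) T,
      ‖breg f b ε t y‖ + Real.sqrt ‖areg f (fun t x => σ t x * (σ t x)ᵀ) ε t y‖
        + (∫ x, ∫ z, ‖h t z x‖ * Freg f ε t x y ∂μ ∂(f t))
        ≤ C * (1 + ‖y‖) := by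
  classical
  obtain ⟨hmf, hprob, hsol⟩ := hf
  obtain ⟨M₀, hM₀⟩ := hfm
  set M : ℝ := max M₀ 0 with hMdef
  have hMnn : 0 ≤ M := le_max_right _ _
  have hmom : ∀ t ∈ Icc (0:ℝ) T, ∫⁻ x, ‖x‖₊ ∂(f t) ≤ ENNReal.ofReal M := fun t ht =>
    (hM₀ t ht).trans (ENNReal.ofReal_le_ofReal (le_max_left _ _))
  have hC₀ : 0 ≤ C₀ := by
    have hg := hgrowth 0 ⟨le_rfl, hT.le⟩ 0
    have h1 : (0:ℝ) ≤ ∫ z, ‖h 0 z 0‖ ∂μ := integral_nonneg fun z => norm_nonneg _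
    have h2 : ‖(0:Vec d)‖ = 0 := norm_zero
    rw [h2] at hg
    nlinarith [norm_nonneg (σ 0 0), norm_nonneg (b 0 0)]
  set CK : ℝ := 4*(9 + 2*(3 + 2*M)^2) with hCKdef
  have hCKpos : 0 < CK := by positivity
  refine ⟨C₀*CK + Real.sqrt ((d:ℝ)*C₀^2*CK) + C₀*CK + 1, by positivity, ?_⟩
  intro ε hε y t ht
  haveI hPM : IsProbabilityMeasure (f t) := hprob t ht
  have hmomt := hmom t ht
  have hε0 := hε.1
  have hyb : (0:ℝ) < 1 + ‖y‖ := by positivity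
  have hGeq : freg f ε t y = ∫ x, gauss d ε (x - y) ∂(f t) := rfl
  set G : ℝ := freg f ε t y with hGdef
  have hGpos : 0 < G := by
    have hl := Stmt4Aux.freg_lower hMnn (f t) hmomt hε0 y
    have hκ : 0 < (2 * π * ε) ^ (-(d:ℝ)/2) * Real.exp (-(‖y‖ + (2*M+2))^2 / (2*ε)) :=
      mul_pos (Stmt4Aux.cst_pos hε0) (Real.exp_pos _)
    show (0:ℝ) < ∫ x, gauss d ε (x - y) ∂(f t)
    linarith
  have hkey1 := Stmt4Aux.key_estimate hMnn (f t) hmomt hε y (p := 1) (Or.inl rfl)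
  have hkey2 := Stmt4Aux.key_estimate hMnn (f t) hmomt hε y (p := 2) (Or.inr rfl)
  rw [← hGeq] at hkey1 hkey2
  -- Part B : drift term
  have hB : ‖breg f b ε t y‖ ≤ C₀ * CK * (1 + ‖y‖) := by
    rw [breg, norm_smul, Real.norm_eq_abs, abs_of_pos (inv_pos.2 hGpos)]
    have h2 : ‖∫ x, gauss d ε (x - y) • b t x ∂(f t)‖
        ≤ ∫ x, gauss d ε (x - y) * ‖b t x‖ ∂(f t) := by
      refine (norm_integral_le_integral_norm _).trans_eq ?_
      congr 1; funext x
      rw [norm_smul, Real.norm_eq_abs, abs_of_nonneg (Stmt4Aux.gauss_pos hε0 _).le]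
    have h3 : ∫ x, gauss d ε (x - y) * ‖b t x‖ ∂(f t)
        ≤ ∫ x, C₀ * (gauss d ε (x - y) * (1 + ‖x‖)^1) ∂(f t) := by
      apply integral_mono_of_nonneg
        (Eventually.of_forall fun x =>
          mul_nonneg (Stmt4Aux.gauss_pos hε0 _).le (norm_nonneg _))
        ((Stmt4Aux.integrable_gauss_pow hε y (Or.inl rfl) (f t)).const_mul C₀)
        (Eventually.of_forall fun x => ?_)
      have hg := hgrowth t ht x
      have h1 : (0:ℝ) ≤ ∫ z, ‖h t z x‖ ∂μ := integral_nonneg fun z => norm_nonneg _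
      have hb : ‖b t x‖ ≤ C₀ * (1 + ‖x‖) := by
        nlinarith [norm_nonneg (σ t x)]
      have := mul_le_mul_of_nonneg_left hb (Stmt4Aux.gauss_pos hε0 (x - y)).le
      simp only [pow_one]
      nlinarith
    rw [MeasureTheory.integral_const_mul] at h3
    have h4 : ∫ x, gauss d ε (x - y) * (1 + ‖x‖)^1 ∂(f t) ≤ CK * (1 + ‖y‖)^1 * G := hkey1
    have h5 : ‖∫ x, gauss d ε (x - y) • b t x ∂(f t)‖ ≤ C₀ * (CK * (1 + ‖y‖)^1 * G) := by
      refine (h2.trans h3).trans ?_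
      exact mul_le_mul_of_nonneg_left h4 hC₀
    rw [pow_one] at h5
    calc G⁻¹ * ‖∫ x, gauss d ε (x - y) • b t x ∂(f t)‖
        ≤ G⁻¹ * (C₀ * (CK * (1 + ‖y‖) * G)) :=
          mul_le_mul_of_nonneg_left h5 (inv_pos.2 hGpos).le
    _ = C₀ * CK * (1 + ‖y‖) := by field_simp
  -- Part C : diffusion term
  have hA : ‖areg f (fun t x => σ t x * (σ t x)ᵀ) ε t y‖
      ≤ (d:ℝ) * C₀^2 * CK * (1 + ‖y‖)^2 := by
    rw [Matrix.norm_le_iff (by positivity)]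
    intro i j
    have hentry : areg f (fun t x => σ t x * (σ t x)ᵀ) ε t y i j
        = G⁻¹ * ∫ x, gauss d ε (x - y) * (σ t x * (σ t x)ᵀ) i j ∂(f t) := rfl
    rw [hentry, Real.norm_eq_abs, abs_mul, abs_of_pos (inv_pos.2 hGpos)]
    have hptbd : ∀ x : Vec d, ‖gauss d ε (x - y) * (σ t x * (σ t x)ᵀ) i j‖
        ≤ ((d:ℝ)*C₀^2) * (gauss d ε (x - y) * (1 + ‖x‖)^2) := by
      intro x
      rw [Real.norm_eq_abs, abs_mul, abs_of_nonneg (Stmt4Aux.gauss_pos hε0 _).le]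
      have hg := hgrowth t ht x
      have h1 : (0:ℝ) ≤ ∫ z, ‖h t z x‖ ∂μ := integral_nonneg fun z => norm_nonneg _
      have hσb : ‖σ t x‖ ≤ C₀ * (1 + ‖x‖) := by nlinarith [norm_nonneg (b t x)]
      have hCx : (0:ℝ) ≤ C₀ * (1 + ‖x‖) := (norm_nonneg _).trans hσb
      have hab : |(σ t x * (σ t x)ᵀ) i j| ≤ (d:ℝ) * (C₀*(1+‖x‖))^2 := by
        have hsum : (σ t x * (σ t x)ᵀ) i j = ∑ k, σ t x i k * σ t x j k := by
          simp [Matrix.mul_apply, Matrix.transpose_apply]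
        rw [hsum]
        calc |∑ k, σ t x i k * σ t x j k| ≤ ∑ k, |σ t x i k * σ t x j k| :=
            Finset.abs_sum_le_sum_abs _ _
        _ ≤ ∑ _k : Fin d, (C₀*(1+‖x‖))^2 := by
            apply Finset.sum_le_sum
            intro k _
            rw [abs_mul]
            have e1 : |σ t x i k| ≤ ‖σ t x‖ := by
              rw [← Real.norm_eq_abs]; exact Matrix.norm_entry_le_entrywise_sup_norm _
            have e2 : |σ t x j k| ≤ ‖σ t x‖ := by
              rw [← Real.norm_eq_abs]; exact Matrix.norm_entry_le_entrywise_sup_norm _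
            calc |σ t x i k| * |σ t x j k|
                ≤ (C₀*(1+‖x‖)) * (C₀*(1+‖x‖)) :=
                  mul_le_mul (e1.trans hσb) (e2.trans hσb) (abs_nonneg _) hCx
            _ = (C₀*(1+‖x‖))^2 := by ring
        _ = (d:ℝ) * (C₀*(1+‖x‖))^2 := by
            simp [Finset.sum_const, Finset.card_univ]
      calc gauss d ε (x - y) * |(σ t x * (σ t x)ᵀ) i j|
          ≤ gauss d ε (x - y) * ((d:ℝ) * (C₀*(1+‖x‖))^2) :=
            mul_le_mul_of_nonneg_left hab (Stmt4Aux.gauss_pos hε0 _).le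
      _ = ((d:ℝ)*C₀^2) * (gauss d ε (x - y) * (1 + ‖x‖)^2) := by ring
    have h2 : |∫ x, gauss d ε (x - y) * (σ t x * (σ t x)ᵀ) i j ∂(f t)|
        ≤ ∫ x, ((d:ℝ)*C₀^2) * (gauss d ε (x - y) * (1 + ‖x‖)^2) ∂(f t) := by
      rw [← Real.norm_eq_abs]
      refine (norm_integral_le_integral_norm _).trans ?_
      exact integral_mono_of_nonneg (Eventually.of_forall fun x => norm_nonneg _)
        ((Stmt4Aux.integrable_gauss_pow hε y (Or.inr rfl) (f t)).const_mul _)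
        (Eventually.of_forall hptbd)
    rw [MeasureTheory.integral_const_mul] at h2
    have h3 : |∫ x, gauss d ε (x - y) * (σ t x * (σ t x)ᵀ) i j ∂(f t)|
        ≤ ((d:ℝ)*C₀^2) * (CK * (1 + ‖y‖)^2 * G) := by
      refine h2.trans ?_
      exact mul_le_mul_of_nonneg_left hkey2 (by positivity)
    calc G⁻¹ * |∫ x, gauss d ε (x - y) * (σ t x * (σ t x)ᵀ) i j ∂(f t)|
        ≤ G⁻¹ * (((d:ℝ)*C₀^2) * (CK * (1 + ‖y‖)^2 * G)) :=
          mul_le_mul_of_nonneg_left h3 (inv_pos.2 hGpos).le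
    _ = (d:ℝ) * C₀^2 * CK * (1 + ‖y‖)^2 := by field_simp
  have hsqrt : Real.sqrt ‖areg f (fun t x => σ t x * (σ t x)ᵀ) ε t y‖
      ≤ Real.sqrt ((d:ℝ)*C₀^2*CK) * (1 + ‖y‖) := by
    refine (Real.sqrt_le_sqrt hA).trans ?_
    rw [show (d:ℝ) * C₀^2 * CK * (1 + ‖y‖)^2 = ((d:ℝ)*C₀^2*CK) * (1 + ‖y‖)^2 by ring,
      Real.sqrt_mul (by positivity), Real.sqrt_sq hyb.le]
  -- Part D : jump term
  have hH : ∫ x, ∫ z, ‖h t z x‖ * Freg f ε t x y ∂μ ∂(f t) ≤ C₀ * CK * (1 + ‖y‖) := by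
    have hFnn : ∀ x, 0 ≤ Freg f ε t x y := fun x =>
      div_nonneg (Stmt4Aux.gauss_pos hε0 _).le hGpos.le
    have hFeq : ∀ x, Freg f ε t x y = gauss d ε (x - y) * G⁻¹ := fun x => div_eq_mul_inv _ _
    have hinner : ∀ x, ∫ z, ‖h t z x‖ * Freg f ε t x y ∂μ
        ≤ (C₀ * G⁻¹) * (gauss d ε (x - y) * (1 + ‖x‖)^1) := by
      intro x
      rw [MeasureTheory.integral_mul_const]
      have hg := hgrowth t ht x
      have h1 : ∫ z, ‖h t z x‖ ∂μ ≤ C₀ * (1 + ‖x‖) := by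
        nlinarith [norm_nonneg (σ t x), norm_nonneg (b t x)]
      calc (∫ z, ‖h t z x‖ ∂μ) * Freg f ε t x y
          ≤ (C₀ * (1 + ‖x‖)) * Freg f ε t x y :=
            mul_le_mul_of_nonneg_right h1 (hFnn x)
      _ = (C₀ * G⁻¹) * (gauss d ε (x - y) * (1 + ‖x‖)^1) := by
          rw [hFeq, pow_one]; ring
    have hinnernn : ∀ x, 0 ≤ ∫ z, ‖h t z x‖ * Freg f ε t x y ∂μ := fun x =>
      integral_nonneg fun z => mul_nonneg (norm_nonneg _) (hFnn x)
    have h2 := integral_mono_of_nonneg (Eventually.of_forall hinnernn)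
      ((Stmt4Aux.integrable_gauss_pow hε y (Or.inl rfl) (f t)).const_mul (C₀ * G⁻¹))
      (Eventually.of_forall hinner)
    rw [MeasureTheory.integral_const_mul] at h2
    refine h2.trans ?_
    calc (C₀ * G⁻¹) * ∫ x, gauss d ε (x - y) * (1 + ‖x‖)^1 ∂(f t)
        ≤ (C₀ * G⁻¹) * (CK * (1 + ‖y‖)^1 * G) := by
          apply mul_le_mul_of_nonneg_left hkey1 (by positivity)
    _ = C₀ * CK * (1 + ‖y‖) := by field_simp
  nlinarith [hB, hsqrt, hH, hyb, Real.sqrt_nonneg ((d:ℝ)*C₀^2*CK),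
    mul_nonneg (mul_nonneg hC₀ hCKpos.le) hyb.le]

end
end

section
/- Let f be a Borel probability measure on ℝ^d, let L ≥ 2 be such that f(B̄(0,L)) ≥ 1/2, and let ε ∈ (0,1). Then for every y ∈ ℝ^d: ∫_{ℝ^d} φ_ε(x−y)(1+|x|)² f(dx) ≤ [ 2(1+2|y|+L)² + 4(|y|+L)² ] · (f ⋆ φ_ε)(y), where (f ⋆ φ_ε)(y) = ∫ φ_ε(x−y) f(dx). In particular the Gaussian-weighted second moment ∫ φ_ε(x−y)(1+|x|)² f(dx) / (f ⋆ φ_ε)(y) is bounded by C_L (1+|y|)² uniformly in ε ∈ (0,1). -/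
open MeasureTheory Real Set Filter Matrix
open scoped BigOperators ENNReal Topology

noncomputable section

attribute [local instance] Matrix.normedAddCommGroup Matrix.normedSpace

variable {d : ℕ} {E : Type*} [MeasurableSpace E]

/-- Radial profile of the Gaussian density. -/
def Gc (d : ℕ) (ε r : ℝ) : ℝ := (2 * π * ε) ^ (-(d:ℝ)/2) * Real.exp (-r^2 / (2*ε))

lemma gauss_eq_Gc (d : ℕ) (ε : ℝ) (x : Vec d) : gauss d ε x = Gc d ε ‖x‖ := rfl

lemma Gc_nonneg {d : ℕ} {ε : ℝ} (hε : 0 < ε) (r : ℝ) : 0 ≤ Gc d ε r := by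
  unfold Gc; positivity

lemma gauss_nonneg' {d : ℕ} {ε : ℝ} (hε : 0 < ε) (x : Vec d) : 0 ≤ gauss d ε x := by
  rw [gauss_eq_Gc]; exact Gc_nonneg hε _

lemma Gc_anti {d : ℕ} {ε a b : ℝ} (hε : 0 < ε) (ha : 0 ≤ a) (hab : a ≤ b) :
    Gc d ε b ≤ Gc d ε a := by
  unfold Gc
  have hc : (0:ℝ) ≤ (2*π*ε) ^ (-(d:ℝ)/2) := by positivity
  apply mul_le_mul_of_nonneg_left _ hc
  apply Real.exp_le_exp.mpr
  have h2 : a^2 ≤ b^2 := by nlinarith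
  have h2e : (0:ℝ) < 2*ε := by linarith
  have := mul_le_mul_of_nonneg_right (neg_le_neg h2) (le_of_lt (inv_pos.mpr h2e))
  simpa [div_eq_mul_inv] using this

lemma Gc_le {d : ℕ} {ε : ℝ} (hε : 0 < ε) (r : ℝ) :
    Gc d ε r ≤ (2*π*ε) ^ (-(d:ℝ)/2) := by
  unfold Gc
  have hc : (0:ℝ) ≤ (2*π*ε) ^ (-(d:ℝ)/2) := by positivity
  have h1 : Real.exp (-r^2 / (2*ε)) ≤ 1 := by
    rw [show (1:ℝ) = Real.exp 0 by simp]
    apply Real.exp_le_exp.mpr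
    have : 0 ≤ r^2 / (2*ε) := by positivity
    rw [neg_div]; linarith
  nlinarith

lemma sq_Gc_anti {d : ℕ} {ε a b : ℝ} (hε : 0 < ε) (ha0 : 0 ≤ a)
    (ha : 2*ε ≤ a^2) (hab : a ≤ b) :
    b^2 * Gc d ε b ≤ a^2 * Gc d ε a := by
  have hs : (0:ℝ) < a^2 := lt_of_lt_of_le (by positivity) ha
  have hts : (0:ℝ) ≤ b^2 - a^2 := by nlinarith
  have hexp : (b^2 - a^2)/(2*ε) + 1 ≤ Real.exp ((b^2 - a^2)/(2*ε)) :=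
    Real.add_one_le_exp _
  have h1 : (b^2 - a^2) ≤ a^2 * ((b^2 - a^2)/(2*ε)) := by
    rw [mul_div_assoc', le_div_iff₀ (by positivity)]
    nlinarith
  have h2 : b^2 ≤ a^2 * Real.exp ((b^2 - a^2)/(2*ε)) :=
    calc b^2 = a^2 + (b^2 - a^2) := by ring
      _ ≤ a^2 + a^2 * ((b^2 - a^2)/(2*ε)) := by linarith
      _ = a^2 * ((b^2 - a^2)/(2*ε) + 1) := by ring
      _ ≤ a^2 * Real.exp ((b^2 - a^2)/(2*ε)) :=
          mul_le_mul_of_nonneg_left hexp (le_of_lt hs)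
  have key : b^2 * Real.exp (-b^2/(2*ε)) ≤ a^2 * Real.exp (-a^2/(2*ε)) := by
    have harg : (b^2 - a^2)/(2*ε) + -b^2/(2*ε) = -a^2/(2*ε) := by ring
    calc b^2 * Real.exp (-b^2/(2*ε))
        ≤ (a^2 * Real.exp ((b^2 - a^2)/(2*ε))) * Real.exp (-b^2/(2*ε)) :=
          mul_le_mul_of_nonneg_right h2 (Real.exp_nonneg _)
      _ = a^2 * Real.exp (-a^2/(2*ε)) := by
          rw [mul_assoc, ← Real.exp_add, harg]
  unfold Gc
  have hc : (0:ℝ) ≤ (2*π*ε) ^ (-(d:ℝ)/2) := by positivity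
  calc b^2 * ((2*π*ε) ^ (-(d:ℝ)/2) * Real.exp (-b^2/(2*ε)))
      = (2*π*ε) ^ (-(d:ℝ)/2) * (b^2 * Real.exp (-b^2/(2*ε))) := by ring
    _ ≤ (2*π*ε) ^ (-(d:ℝ)/2) * (a^2 * Real.exp (-a^2/(2*ε))) :=
        mul_le_mul_of_nonneg_left key hc
    _ = a^2 * ((2*π*ε) ^ (-(d:ℝ)/2) * Real.exp (-a^2/(2*ε))) := by ring


set_option maxHeartbeats 1000000 in
/-- Gaussian-weighted second moment bound. -/
theorem stmt13 {d : ℕ} (f : Measure (Vec d)) [IsProbabilityMeasure f]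
    (L : ℝ) (hL : 2 ≤ L) (hfL : (1/2 : ℝ≥0∞) ≤ f (Metric.closedBall 0 L)) :
    (∀ ε ∈ Ioo (0:ℝ) 1, ∀ y : Vec d,
      ∫ x, gauss d ε (x - y) * (1 + ‖x‖)^2 ∂f
        ≤ (2 * (1 + 2*‖y‖ + L)^2 + 4 * (‖y‖ + L)^2) * ∫ x, gauss d ε (x - y) ∂f) ∧
    ∃ C : ℝ, ∀ ε ∈ Ioo (0:ℝ) 1, ∀ y : Vec d,
      ∫ x, gauss d ε (x - y) * (1 + ‖x‖)^2 ∂f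
        ≤ C * (1 + ‖y‖)^2 * ∫ x, gauss d ε (x - y) ∂f := by
  have hcball : ∀ ε : ℝ, 0 < ε → ε < 1 → ∀ y : Vec d,
      ∫ x, gauss d ε (x - y) * (1 + ‖x‖)^2 ∂f
        ≤ (2 * (1 + 2*‖y‖ + L)^2 + 4 * (‖y‖ + L)^2) * ∫ x, gauss d ε (x - y) ∂f := by
    intro ε hε0 hε1 y
    set g : Vec d → ℝ := fun x => gauss d ε (x - y) with hgdef
    have hg0 : ∀ x, 0 ≤ g x := fun x => gauss_nonneg' hε0 _
    have hgG : ∀ x, g x = Gc d ε ‖x - y‖ := fun x => rfl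
    set a : ℝ := ‖y‖ + L with hadef
    have ha2 : 2 ≤ a := by have := norm_nonneg y; simp only [hadef]; linarith
    have ha0 : 0 ≤ a := by linarith
    have haG : 2*ε ≤ a^2 := by nlinarith
    set K : ℝ := 4 * a^2 * Gc d ε a with hKdef
    have hK0 : 0 ≤ K := by
      have := Gc_nonneg (d := d) hε0 a
      positivity
    set S := Metric.closedBall (0 : Vec d) L with hSdef
    have hS : MeasurableSet S := measurableSet_closedBall
    have hgcont : Continuous g := by
      have : Continuous fun x : Vec d =>
          (2*π*ε) ^ (-(d:ℝ)/2) * Real.exp (-‖x - y‖^2 / (2*ε)) := by fun_prop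
      exact this
    have hgle : ∀ x, g x ≤ (2*π*ε) ^ (-(d:ℝ)/2) := by
      intro x; rw [hgG]; exact Gc_le hε0 _
    have hInt1 : Integrable g f := by
      refine (integrable_const ((2*π*ε) ^ (-(d:ℝ)/2))).mono'
        hgcont.aestronglyMeasurable ?_
      filter_upwards with x
      rw [Real.norm_eq_abs, abs_of_nonneg (hg0 x)]
      exact hgle x
    -- pointwise bound
    have hpt : ∀ x, g x * (1 + ‖x‖)^2
        ≤ (1 + 2*‖y‖ + L)^2 * g x + Sᶜ.indicator (fun _ => K) x := by
      intro x
      have hind0 : 0 ≤ Sᶜ.indicator (fun _ : Vec d => K) x :=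
        Set.indicator_nonneg (fun _ _ => hK0) x
      by_cases hx : ‖x‖ ≤ 2*‖y‖ + L
      · have h1 : (1 + ‖x‖)^2 ≤ (1 + 2*‖y‖ + L)^2 := by
          apply pow_le_pow_left₀ (by positivity) (by linarith)
        have h2 : g x * (1 + ‖x‖)^2 ≤ (1 + 2*‖y‖ + L)^2 * g x := by
          nlinarith [hg0 x]
        linarith
      · push_neg at hx
        have hxS : x ∈ Sᶜ := by
          simp only [hSdef, Set.mem_compl_iff, Metric.mem_closedBall, dist_zero_right, not_le]
          have := norm_nonneg y; linarith
        rw [Set.indicator_of_mem hxS]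
        have hxy : ‖x‖ - ‖y‖ ≤ ‖x - y‖ := norm_sub_norm_le x y
        have hb : a ≤ ‖x - y‖ := by simp only [hadef]; linarith
        have h14 : 1 + ‖x‖ ≤ 2 * ‖x - y‖ := by linarith
        have h14' : (1 + ‖x‖)^2 ≤ 4 * ‖x - y‖^2 := by
          nlinarith [norm_nonneg x, norm_nonneg (x - y)]
        have h15 : g x * (1 + ‖x‖)^2 ≤ 4 * (‖x - y‖^2 * g x) := by
          nlinarith [hg0 x]
        have h16 : ‖x - y‖^2 * Gc d ε ‖x - y‖ ≤ a^2 * Gc d ε a :=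
          sq_Gc_anti hε0 ha0 haG hb
        have hterm : 0 ≤ (1 + 2*‖y‖ + L)^2 * g x :=
          mul_nonneg (sq_nonneg _) (hg0 x)
        rw [hgG] at h15
        have : g x * (1 + ‖x‖)^2 ≤ K := by
          rw [hgG, hKdef]; nlinarith
        linarith
    have hInt2 : Integrable (fun x => g x * (1 + ‖x‖)^2) f := by
      refine (integrable_const ((1 + 2*‖y‖ + L)^2 * (2*π*ε) ^ (-(d:ℝ)/2) + K)).mono'
        ((hgcont.mul (by fun_prop)).aestronglyMeasurable) ?_
      filter_upwards with x
      rw [Real.norm_eq_abs, abs_of_nonneg (mul_nonneg (hg0 x) (by positivity))]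
      have h1 := hpt x
      have h2 : Sᶜ.indicator (fun _ : Vec d => K) x ≤ K := by
        classical
        by_cases hx : x ∈ Sᶜ
        · rw [Set.indicator_of_mem hx]
        · rw [Set.indicator_of_notMem hx]; exact hK0
      have h3 : (1 + 2*‖y‖ + L)^2 * g x ≤ (1 + 2*‖y‖ + L)^2 * (2*π*ε) ^ (-(d:ℝ)/2) :=
        mul_le_mul_of_nonneg_left (hgle x) (sq_nonneg _)
      linarith
    have hInd : Integrable (Sᶜ.indicator (fun _ : Vec d => K)) f :=
      (integrable_const K).indicator hS.compl
    set I : ℝ := ∫ x, g x ∂f with hIdef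
    have hI0 : 0 ≤ I := integral_nonneg hg0
    have step1 : ∫ x, g x * (1 + ‖x‖)^2 ∂f
        ≤ (1 + 2*‖y‖ + L)^2 * I + (f Sᶜ).toReal * K := by
      calc ∫ x, g x * (1 + ‖x‖)^2 ∂f
          ≤ ∫ x, ((1 + 2*‖y‖ + L)^2 * g x + Sᶜ.indicator (fun _ => K) x) ∂f :=
            integral_mono hInt2 ((hInt1.const_mul _).add hInd) hpt
        _ = (1 + 2*‖y‖ + L)^2 * I + (f Sᶜ).toReal * K := by
            rw [integral_add (hInt1.const_mul _) hInd, integral_const_mul,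
              integral_indicator_const _ hS.compl]
            simp [smul_eq_mul]
            rfl
    show ∫ x, g x * (1 + ‖x‖)^2 ∂f ≤ (2 * (1 + 2*‖y‖ + L)^2 + 4 * a^2) * I
    clear_value g a K S I
    -- lower bound for I
    have hxs : ∀ x ∈ S, Gc d ε a ≤ g x := by
      intro x hx
      have hxL : ‖x‖ ≤ L := by
        simpa only [hSdef, Metric.mem_closedBall, dist_zero_right] using hx
      have hxya : ‖x - y‖ ≤ a := by
        calc ‖x - y‖ ≤ ‖x‖ + ‖y‖ := norm_sub_le x y
          _ ≤ a := by simp only [hadef]; linarith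
      rw [hgG]
      exact Gc_anti hε0 (norm_nonneg _) hxya
    have hlow : Gc d ε a ≤ 2 * I := by
      have h1 : Gc d ε a * (f S).toReal ≤ ∫ x in S, g x ∂f :=
        by have := setIntegral_ge_of_const_le_real hS (measure_ne_top f S) hxs hInt1.integrableOn
           simpa only [smul_eq_mul, mul_comm, Measure.real] using this
      have h2 : ∫ x in S, g x ∂f ≤ I := by
        rw [hIdef]; exact setIntegral_le_integral hInt1 (Filter.Eventually.of_forall hg0)
      have h3 : (1/2:ℝ) ≤ (f S).toReal := by
        have h4 := ENNReal.toReal_mono (measure_ne_top f S) hfL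
        calc (1/2:ℝ) = ((1/2 : ℝ≥0∞)).toReal := by simp
          _ ≤ (f S).toReal := h4
      have hGa := Gc_nonneg (d := d) hε0 a
      nlinarith [mul_le_mul_of_nonneg_left h3 hGa]
    have hcompl : (f Sᶜ).toReal ≤ 1/2 := by
      have hfS : f Sᶜ ≤ 1/2 := by
        rw [measure_compl hS (measure_ne_top f S), measure_univ, tsub_le_iff_right]
        calc (1:ℝ≥0∞) = 1/2 + 1/2 := (ENNReal.add_halves 1).symm
          _ ≤ 1/2 + f S := add_le_add le_rfl hfL
      calc (f Sᶜ).toReal ≤ ((1/2:ℝ≥0∞)).toReal :=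
            ENNReal.toReal_mono (by norm_num) hfS
        _ = 1/2 := by simp
    have h3 : (f Sᶜ).toReal * K ≤ 4 * a^2 * I := by
      have h5 : (f Sᶜ).toReal * K ≤ (1/2) * K :=
        mul_le_mul_of_nonneg_right hcompl hK0
      have h6 : (1/2:ℝ) * K = 2 * a^2 * Gc d ε a := by rw [hKdef]; ring
      have h7 : 2 * a^2 * Gc d ε a ≤ 2 * a^2 * (2 * I) :=
        mul_le_mul_of_nonneg_left hlow (by positivity)
      nlinarith
    calc ∫ x, g x * (1 + ‖x‖)^2 ∂f
        ≤ (1 + 2*‖y‖ + L)^2 * I + (f Sᶜ).toReal * K := step1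
      _ ≤ (1 + 2*‖y‖ + L)^2 * I + 4 * a^2 * I := by linarith
      _ ≤ (2 * (1 + 2*‖y‖ + L)^2 + 4 * a^2) * I := by
          nlinarith [mul_nonneg (sq_nonneg (1 + 2*‖y‖ + L)) hI0]
  constructor
  · intro ε hε y; exact hcball ε hε.1 hε.2 y
  · refine ⟨2*(1+L)^2 + 4*L^2, ?_⟩
    intro ε hε y
    refine (hcball ε hε.1 hε.2 y).trans ?_
    have hI0 : 0 ≤ ∫ x, gauss d ε (x - y) ∂f :=
      integral_nonneg fun x => gauss_nonneg' hε.1 _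
    have t0 : (0:ℝ) ≤ ‖y‖ := norm_nonneg y
    refine mul_le_mul_of_nonneg_right ?_ hI0
    have h1 : 1 + 2*‖y‖ + L ≤ (1+L)*(1+‖y‖) := by nlinarith
    have h2 : ‖y‖ + L ≤ L*(1+‖y‖) := by nlinarith
    have h1' : (1 + 2*‖y‖ + L)^2 ≤ ((1+L)*(1+‖y‖))^2 :=
      pow_le_pow_left₀ (by linarith) h1 2
    have h2' : (‖y‖ + L)^2 ≤ (L*(1+‖y‖))^2 :=
      pow_le_pow_left₀ (by linarith) h2 2
    calc 2*(1 + 2*‖y‖ + L)^2 + 4*(‖y‖ + L)^2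
        ≤ 2*((1+L)*(1+‖y‖))^2 + 4*(L*(1+‖y‖))^2 := by linarith
      _ = (2*(1+L)^2 + 4*L^2)*(1+‖y‖)^2 := by ring


end
end

section
/- Let (f_t)_{t∈[0,T]} be a measurable family of Borel probability measures on ℝ^d, let (E,𝓔,μ) be a σ-finite measure space and let A ∈ 𝓔 with μ(A) < ∞. Then for every set S in the product σ-algebra 𝓑([0,T]×ℝ^d) ⊗ 𝓔 and every ε > 0 there exists a measurable function φ : [0,T]×E×ℝ^d → ℝ such that (t,x) ↦ φ(t,z,x) is continuous on [0,T]×ℝ^d for each fixed z ∈ E, and ∫₀^T ∫_A ∫_{ℝ^d} | 1_S(t,z,x) − φ(t,z,x) | f_t(dx) μ(dz) dt < ε. -/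
open MeasureTheory Real Set Filter Matrix
open scoped BigOperators ENNReal Topology

noncomputable section

attribute [local instance] Matrix.normedAddCommGroup Matrix.normedSpace

variable {d : ℕ} {E : Type*} [MeasurableSpace E]

section Stmt15Aux

open scoped ENNReal

/-- Clamping a real number to `[0,1]`. -/
def clamp01 (r : ℝ) : ℝ := max 0 (min 1 r)

lemma clamp01_mem (r : ℝ) : clamp01 r ∈ Icc (0:ℝ) 1 :=
  ⟨le_max_left _ _, max_le zero_le_one (min_le_left _ _)⟩

lemma continuous_clamp01 : Continuous clamp01 :=
  continuous_const.max (continuous_const.min continuous_id)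

lemma abs_sub_clamp01 {a : ℝ} (ha : a ∈ Icc (0:ℝ) 1) (r : ℝ) :
    |a - clamp01 r| ≤ |a - r| := by
  obtain ⟨h0, h1⟩ := ha
  unfold clamp01
  rcases le_total r 0 with h | h
  · rw [min_eq_right (h.trans zero_le_one), max_eq_left h,
      abs_of_nonneg (by linarith), abs_of_nonneg (by linarith)]
    linarith
  · rcases le_total 1 r with h' | h'
    · rw [min_eq_left h', max_eq_right zero_le_one,
        abs_of_nonpos (by linarith), abs_of_nonpos (by linarith)]
      linarith
    · rw [min_eq_right h', max_eq_right h]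

lemma indicator_one_mem {α : Type*} (U : Set α) (x : α) :
    U.indicator (fun _ => (1:ℝ)) x ∈ Icc (0:ℝ) 1 := by
  by_cases h : x ∈ U <;> simp [Set.indicator_apply, h, Set.mem_Icc]

lemma abs_indicator_sub_le_one {α : Type*} {U : Set α} {x : α} {b : ℝ}
    (hb : b ∈ Icc (0:ℝ) 1) : |U.indicator (fun _ => (1:ℝ)) x - b| ≤ 1 := by
  obtain ⟨h0, h1⟩ := indicator_one_mem U x
  rw [abs_sub_le_iff]
  constructor <;> [linarith [hb.1]; linarith [hb.2]]

/-- Approximation of indicators by continuous `[0,1]`-valued functions in `L¹` of a finite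
Borel measure on a metric space. -/
lemma exists_cont_approx_indicator {X : Type*} [MeasurableSpace X] [MetricSpace X] [BorelSpace X]
    (m : MeasureTheory.Measure X) [MeasureTheory.IsFiniteMeasure m]
    {U : Set X} (hU : MeasurableSet U) {δ : ℝ≥0∞} (hδ : δ ≠ 0) :
    ∃ g : X → ℝ, Continuous g ∧ (∀ x, g x ∈ Icc (0:ℝ) 1) ∧
      (∫⁻ x, ENNReal.ofReal |U.indicator (fun _ => (1:ℝ)) x - g x| ∂m) < δ := by
  have hδ2 : δ / 2 ≠ 0 := (ENNReal.div_pos hδ (by norm_num)).ne'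
  obtain ⟨F, hFU, hFc, hF⟩ := hU.exists_isClosed_diff_lt (measure_ne_top m U) hδ2
  obtain ⟨O, hUO, hOo, -, hO⟩ := hU.exists_isOpen_diff_lt (measure_ne_top m U) hδ2
  obtain ⟨g, hg0, hg1, hg01⟩ := exists_continuous_zero_one_of_isClosed
    (isClosed_compl_iff.mpr hOo) hFc
    (Set.disjoint_left.mpr fun x hx hxF => hx (hUO (hFU hxF)))
  refine ⟨g, g.continuous, hg01, ?_⟩
  have hb : ∀ x, ENNReal.ofReal |U.indicator (fun _ => (1:ℝ)) x - g x|
      ≤ (O \ F).indicator (fun _ => (1:ℝ≥0∞)) x := by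
    intro x
    by_cases hxF : x ∈ F
    · have h1 : g x = 1 := hg1 hxF
      have h2 : x ∈ U := hFU hxF
      simp [Set.indicator_apply, h2, h1]
    · by_cases hxO : x ∈ O
      · have he : (O \ F).indicator (fun _ => (1:ℝ≥0∞)) x = 1 := by
          simp [Set.indicator_apply, hxO, hxF]
        rw [he]
        exact ENNReal.ofReal_le_one.mpr (abs_indicator_sub_le_one (hg01 x))
      · have h1 : g x = 0 := hg0 hxO
        have h2 : x ∉ U := fun h => hxO (hUO h)
        simp [Set.indicator_apply, h2, h1]
  calc (∫⁻ x, ENNReal.ofReal |U.indicator (fun _ => (1:ℝ)) x - g x| ∂m)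
      ≤ ∫⁻ x, (O \ F).indicator (fun _ => (1:ℝ≥0∞)) x ∂m := MeasureTheory.lintegral_mono hb
    _ = m (O \ F) := by
        rw [MeasureTheory.lintegral_indicator (hOo.measurableSet.diff hFc.measurableSet)]
        simp
    _ ≤ m ((O \ U) ∪ (U \ F)) := by
        refine MeasureTheory.measure_mono fun x hx => ?_
        by_cases hxU : x ∈ U
        · exact Or.inr ⟨hxU, hx.2⟩
        · exact Or.inl ⟨hx.1, hxU⟩
    _ ≤ m (O \ U) + m (U \ F) := MeasureTheory.measure_union_le _ _
    _ < δ/2 + δ/2 := ENNReal.add_lt_add hO hF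
    _ = δ := ENNReal.add_halves δ

lemma indicator_biUnion_sum {α : Type*} (B : ℕ → Set α) (hd : Pairwise (Function.onFun Disjoint B))
    (N : ℕ) (p : α) :
    (⋃ i ∈ Finset.range N, B i).indicator (fun _ => (1:ℝ)) p
      = ∑ i ∈ Finset.range N, (B i).indicator (fun _ => (1:ℝ)) p := by
  by_cases hp : p ∈ ⋃ i ∈ Finset.range N, B i
  · obtain ⟨i, hi, hpi⟩ : ∃ i ∈ Finset.range N, p ∈ B i := by simpa using hp
    rw [Set.indicator_of_mem hp, eq_comm]
    rw [Finset.sum_eq_single i]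
    · simp [Set.indicator_of_mem hpi]
    · intro j hj hji
      exact Set.indicator_of_notMem
        (fun hpj => Set.disjoint_left.mp (hd hji) hpj hpi) _
    · intro hi'; exact absurd hi hi'
  · rw [Set.indicator_of_notMem hp, eq_comm]
    exact Finset.sum_eq_zero fun i hi =>
      Set.indicator_of_notMem (fun hpi => hp (Set.mem_iUnion₂.mpr ⟨i, hi, hpi⟩)) _

lemma abs_mul_sub_mul {a c u w v : ℝ} (ha : a ∈ Icc (0:ℝ) 1) (hc : c ∈ Icc (0:ℝ) 1)
    (hu : u ∈ Icc (0:ℝ) 1) (hw : w ∈ Icc (0:ℝ) 1) (hv : v ∈ Icc (0:ℝ) 1) :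
    |a * v * c - u * v * w| ≤ |a - u| + |c - w| := by
  have h2 : |v * c| ≤ 1 := by
    rw [abs_of_nonneg (mul_nonneg hv.1 hc.1)]
    exact mul_le_one₀ hv.2 hc.1 hc.2
  have h3 : |u * v| ≤ 1 := by
    rw [abs_of_nonneg (mul_nonneg hu.1 hv.1)]
    exact mul_le_one₀ hu.2 hv.1 hv.2
  calc |a * v * c - u * v * w|
      = |(a - u) * (v * c) + (u * v) * (c - w)| := by
        rw [show a * v * c - u * v * w = (a - u) * (v * c) + (u * v) * (c - w) from by ring]
    _ ≤ |(a - u) * (v * c)| + |(u * v) * (c - w)| := abs_add_le _ _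
    _ = |a - u| * |v * c| + |u * v| * |c - w| := by rw [abs_mul (a - u) (v * c), abs_mul (u * v) (c - w)]
    _ ≤ |a - u| * 1 + 1 * |c - w| :=
        add_le_add (mul_le_mul_of_nonneg_left h2 (abs_nonneg _))
          (mul_le_mul_of_nonneg_right h3 (abs_nonneg _))
    _ = |a - u| + |c - w| := by ring

lemma indicator_prod3 {α β γ : Type*} (U : Set α) (V : Set β) (W : Set γ) (p : α × β × γ) :
    (U ×ˢ V ×ˢ W).indicator (fun _ => (1:ℝ)) p
      = U.indicator (fun _ => (1:ℝ)) p.1 * V.indicator (fun _ => (1:ℝ)) p.2.1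
        * W.indicator (fun _ => (1:ℝ)) p.2.2 := by
  by_cases h1 : p.1 ∈ U <;> by_cases h2 : p.2.1 ∈ V <;> by_cases h3 : p.2.2 ∈ W <;>
    simp [Set.indicator_apply, Set.mem_prod, h1, h2, h3]

end Stmt15Aux

section GoodApprox

open scoped ENNReal

/-- Any product-measurable set's indicator can be approximated in `L¹(ν)` by measurable
`[0,1]`-valued functions which are continuous in `(t,x)` for each fixed `z`. -/
lemma goodApprox {d : ℕ} {E : Type*} [MeasurableSpace E] (ν : Measure (ℝ × E × Vec d))
    [IsFiniteMeasure ν] {B : Set (ℝ × E × Vec d)} (hB : MeasurableSet B)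
    {δ : ℝ≥0∞} (hδ : δ ≠ 0) :
    ∃ φ : ℝ → E → Vec d → ℝ,
      Measurable (fun p : ℝ × E × Vec d => φ p.1 p.2.1 p.2.2) ∧
      (∀ z, Continuous fun q : ℝ × Vec d => φ q.1 z q.2) ∧
      (∀ t z x, φ t z x ∈ Icc (0:ℝ) 1) ∧
      (∫⁻ p, ENNReal.ofReal |B.indicator (fun _ => (1:ℝ)) p - φ p.1 p.2.1 p.2.2| ∂ν) < δ := by
  by_cases hδtop : δ = ⊤
  · refine ⟨fun _ _ _ => 0, measurable_const, fun z => continuous_const,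
      fun t z x => ⟨le_rfl, zero_le_one⟩, ?_⟩
    calc (∫⁻ p, ENNReal.ofReal |B.indicator (fun _ => (1:ℝ)) p - 0| ∂ν)
        ≤ ∫⁻ _, 1 ∂ν := by
          refine lintegral_mono fun p => ?_
          rw [sub_zero]
          refine ENNReal.ofReal_le_one.mpr ?_
          obtain ⟨q0, q1⟩ := indicator_one_mem B p
          rw [abs_of_nonneg q0]
          exact q1
      _ = ν univ := lintegral_one
      _ < ⊤ := measure_lt_top ν _
      _ = δ := hδtop.symm
  -- the main induction, with finite `δ`
  have main : ∀ ⦃B' : Set (ℝ × E × Vec d)⦄, MeasurableSet B' →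
      ∀ δ' : ℝ≥0∞, δ' ≠ 0 → δ' ≠ ⊤ →
      ∃ φ : ℝ → E → Vec d → ℝ,
        Measurable (fun p : ℝ × E × Vec d => φ p.1 p.2.1 p.2.2) ∧
        (∀ z, Continuous fun q : ℝ × Vec d => φ q.1 z q.2) ∧
        (∀ t z x, φ t z x ∈ Icc (0:ℝ) 1) ∧
        (∫⁻ p, ENNReal.ofReal |B'.indicator (fun _ => (1:ℝ)) p - φ p.1 p.2.1 p.2.2| ∂ν) < δ' := by
    have h_eq : (inferInstance : MeasurableSpace (ℝ × E × Vec d)) =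
        MeasurableSpace.generateFrom (Set.image2 (· ×ˢ ·) {U : Set ℝ | MeasurableSet U}
          (Set.image2 (· ×ˢ ·) {V : Set E | MeasurableSet V}
            {W : Set (Vec d) | MeasurableSet W})) :=
      (generateFrom_eq_prod MeasurableSpace.generateFrom_measurableSet generateFrom_prod
        isCountablySpanning_measurableSet
        (isCountablySpanning_measurableSet.prod isCountablySpanning_measurableSet)).symm
    have h_inter : IsPiSystem (Set.image2 (· ×ˢ ·) {U : Set ℝ | MeasurableSet U}
        (Set.image2 (· ×ˢ ·) {V : Set E | MeasurableSet V} {W : Set (Vec d) | MeasurableSet W})) :=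
      IsPiSystem.prod MeasurableSpace.isPiSystem_measurableSet isPiSystem_prod
    refine MeasurableSpace.induction_on_inter h_eq h_inter ?_ ?_ ?_ ?_
    · -- empty set
      intro δ' hδ'0 _
      refine ⟨fun _ _ _ => 0, measurable_const, fun z => continuous_const,
        fun t z x => ⟨le_rfl, zero_le_one⟩, ?_⟩
      simpa using pos_iff_ne_zero.mpr hδ'0
    · -- rectangles
      rintro B' hB'
      obtain ⟨U, hU, VW, hVW, rfl⟩ := hB'
      obtain ⟨V, hV, W, hW, rfl⟩ := hVW
      simp only [Set.mem_setOf_eq] at hU hV hW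
      intro δ' hδ'0 _
      have hδ'2 : δ' / 2 ≠ 0 := (ENNReal.div_pos hδ'0 (by norm_num)).ne'
      haveI := Measure.isFiniteMeasure_map ν (fun p : ℝ × E × Vec d => p.1)
      haveI := Measure.isFiniteMeasure_map ν (fun p : ℝ × E × Vec d => p.2.2)
      obtain ⟨g, hgc, hg01, hgi⟩ :=
        exists_cont_approx_indicator (ν.map (fun p : ℝ × E × Vec d => p.1)) hU hδ'2
      obtain ⟨h, hhc, hh01, hhi⟩ :=
        exists_cont_approx_indicator (ν.map (fun p : ℝ × E × Vec d => p.2.2)) hW hδ'2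
      refine ⟨fun t z x => g t * V.indicator (fun _ => (1:ℝ)) z * h x, ?_, ?_, ?_, ?_⟩
      · exact ((hgc.measurable.comp measurable_fst).mul
          ((measurable_const.indicator hV).comp (measurable_fst.comp measurable_snd))).mul
          (hhc.measurable.comp measurable_snd.snd)
      · intro z
        exact ((hgc.comp continuous_fst).mul continuous_const).mul (hhc.comp continuous_snd)
      · intro t z x
        refine ⟨mul_nonneg (mul_nonneg (hg01 t).1 (indicator_one_mem V z).1) (hh01 x).1, ?_⟩
        exact mul_le_one₀
          (mul_le_one₀ (hg01 t).2 (indicator_one_mem V z).1 (indicator_one_mem V z).2)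
          (hh01 x).1 (hh01 x).2
      · have hgm : Measurable fun t : ℝ =>
            ENNReal.ofReal |U.indicator (fun _ => (1:ℝ)) t - g t| :=
          ((measurable_const.indicator hU).sub hgc.measurable).abs.ennreal_ofReal
        have hhm : Measurable fun x : Vec d =>
            ENNReal.ofReal |W.indicator (fun _ => (1:ℝ)) x - h x| :=
          ((measurable_const.indicator hW).sub hhc.measurable).abs.ennreal_ofReal
        calc (∫⁻ p, ENNReal.ofReal |(U ×ˢ V ×ˢ W).indicator (fun _ => (1:ℝ)) p
                - g p.1 * V.indicator (fun _ => (1:ℝ)) p.2.1 * h p.2.2| ∂ν)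
            ≤ ∫⁻ p, (ENNReal.ofReal |U.indicator (fun _ => (1:ℝ)) p.1 - g p.1|
                + ENNReal.ofReal |W.indicator (fun _ => (1:ℝ)) p.2.2 - h p.2.2|) ∂ν := by
              refine lintegral_mono fun p => ?_
              rw [indicator_prod3]
              refine le_trans (ENNReal.ofReal_le_ofReal
                (abs_mul_sub_mul (indicator_one_mem U p.1) (indicator_one_mem W p.2.2)
                  (hg01 p.1) (hh01 p.2.2) (indicator_one_mem V p.2.1)))
                ENNReal.ofReal_add_le
          _ = (∫⁻ p : ℝ × E × Vec d, ENNReal.ofReal |U.indicator (fun _ => (1:ℝ)) p.1 - g p.1| ∂ν)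
                + ∫⁻ p : ℝ × E × Vec d,
                    ENNReal.ofReal |W.indicator (fun _ => (1:ℝ)) p.2.2 - h p.2.2| ∂ν :=
              lintegral_add_left (hgm.comp measurable_fst) _
          _ = (∫⁻ t, ENNReal.ofReal |U.indicator (fun _ => (1:ℝ)) t - g t|
                  ∂(ν.map (fun p : ℝ × E × Vec d => p.1)))
                + ∫⁻ x, ENNReal.ofReal |W.indicator (fun _ => (1:ℝ)) x - h x|
                  ∂(ν.map (fun p : ℝ × E × Vec d => p.2.2)) := by
              rw [lintegral_map hgm measurable_fst,
                lintegral_map hhm measurable_snd.snd]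
          _ < δ' / 2 + δ' / 2 := ENNReal.add_lt_add hgi hhi
          _ = δ' := ENNReal.add_halves δ'
    · -- complement
      intro B' hB'm hGood δ' hδ'0 hδ't
      obtain ⟨φ, h1, h2, h3, h4⟩ := hGood δ' hδ'0 hδ't
      refine ⟨fun t z x => 1 - φ t z x, measurable_const.sub h1,
        fun z => continuous_const.sub (h2 z),
        fun t z x => by
          simp only [Set.mem_Icc]
          constructor <;> [linarith [(h3 t z x).2]; linarith [(h3 t z x).1]], ?_⟩
      have key : ∀ p : ℝ × E × Vec d,
          |B'ᶜ.indicator (fun _ => (1:ℝ)) p - (1 - φ p.1 p.2.1 p.2.2)|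
            = |B'.indicator (fun _ => (1:ℝ)) p - φ p.1 p.2.1 p.2.2| := by
        intro p
        by_cases hp : p ∈ B'
        · rw [Set.indicator_of_mem hp, Set.indicator_of_notMem (by simpa using hp)]
          rw [show (0:ℝ) - (1 - φ p.1 p.2.1 p.2.2) = -(1 - φ p.1 p.2.1 p.2.2) from by ring,
            abs_neg]
        · rw [Set.indicator_of_notMem hp, Set.indicator_of_mem (by simpa using hp)]
          rw [show (1:ℝ) - (1 - φ p.1 p.2.1 p.2.2) = -(0 - φ p.1 p.2.1 p.2.2) from by ring,
            abs_neg]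
      exact lt_of_le_of_lt (le_of_eq (lintegral_congr fun p => by rw [key p])) h4
    · -- disjoint unions
      intro B' hd hB'm hGood δ' hδ'0 hδ't
      have hδ'2 : δ' / 2 ≠ 0 := (ENNReal.div_pos hδ'0 (by norm_num)).ne'
      have hδ'2t : δ' / 2 ≠ ⊤ :=
        (lt_of_le_of_lt ENNReal.half_le_self (lt_top_iff_ne_top.mpr hδ't)).ne
      set P : ℕ → Set (ℝ × E × Vec d) := fun N => ⋃ i ∈ Finset.range N, B' i with hP
      have hPmeas : ∀ N, MeasurableSet (P N) :=
        fun N => (Finset.range N).measurableSet_biUnion (fun i _ => hB'm i)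
      have hPmono : Monotone P := by
        intro a b hab
        exact Set.iUnion₂_subset fun i hi =>
          Set.subset_iUnion₂ (s := fun i _ => B' i) i (Finset.range_subset_range.mpr hab hi)
      have hPsub : ∀ N, P N ⊆ ⋃ n, B' n :=
        fun N => Set.iUnion₂_subset fun i _ => Set.subset_iUnion B' i
      have hPcov : (⋃ N, P N) = ⋃ n, B' n := by
        refine Set.Subset.antisymm (Set.iUnion_subset hPsub) fun x hx => ?_
        obtain ⟨n, hn⟩ := Set.mem_iUnion.mp hx
        exact Set.mem_iUnion.mpr ⟨n + 1,
          Set.mem_iUnion₂.mpr ⟨n, Finset.mem_range.mpr (Nat.lt_succ_self n), hn⟩⟩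
      have hInter : (⋂ N, ((⋃ n, B' n) \ P N)) = ∅ := by
        rw [← Set.diff_iUnion, hPcov, Set.diff_self]
      have htend : Tendsto (fun N => ν ((⋃ n, B' n) \ P N)) atTop (𝓝 0) := by
        have h1 := tendsto_measure_iInter_atTop (μ := ν)
          (fun N => ((MeasurableSet.iUnion hB'm).diff (hPmeas N)).nullMeasurableSet)
          (fun a b hab => Set.diff_subset_diff_right (hPmono hab))
          ⟨0, measure_ne_top ν _⟩
        rw [hInter, measure_empty] at h1
        exact h1
      obtain ⟨N, hN⟩ := (htend.eventually_lt_const (pos_iff_ne_zero.mpr hδ'2)).exists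
      rcases Nat.eq_zero_or_pos N with rfl | hNpos
      · refine ⟨fun _ _ _ => 0, measurable_const, fun z => continuous_const,
          fun t z x => ⟨le_rfl, zero_le_one⟩, ?_⟩
        have key : ∀ p : ℝ × E × Vec d,
            ENNReal.ofReal |(⋃ n, B' n).indicator (fun _ => (1:ℝ)) p - 0|
              = (⋃ n, B' n).indicator (fun _ => (1:ℝ≥0∞)) p := by
          intro p
          by_cases hp : p ∈ ⋃ n, B' n <;> simp [Set.indicator_apply, hp]
        rw [lintegral_congr key, lintegral_indicator (MeasurableSet.iUnion hB'm)]
        simp only [lintegral_one, Measure.restrict_apply_univ]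
        have : P 0 = ∅ := by simp [hP]
        rw [this, Set.diff_empty] at hN
        exact lt_of_lt_of_le hN ENNReal.half_le_self
      · set η : ℝ≥0∞ := δ' / 2 / N with hη
        have hη0 : η ≠ 0 := by
          rw [hη, Ne, ENNReal.div_eq_zero_iff]
          simp [hδ'2, ENNReal.natCast_ne_top]
        have hηt : η ≠ ⊤ :=
          (ENNReal.div_lt_top hδ'2t (by exact_mod_cast hNpos.ne')).ne
        choose φ hm hc h01 hi using fun i => hGood i η hη0 hηt
        refine ⟨fun t z x => clamp01 (∑ i ∈ Finset.range N, φ i t z x), ?_, ?_,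
          fun t z x => clamp01_mem _, ?_⟩
        · exact continuous_clamp01.measurable.comp
            (Finset.measurable_sum _ (fun i _ => hm i))
        · intro z
          exact continuous_clamp01.comp (continuous_finset_sum _ fun i _ => hc i z)
        · have hptw : ∀ p : ℝ × E × Vec d,
              ENNReal.ofReal |(⋃ n, B' n).indicator (fun _ => (1:ℝ)) p
                  - clamp01 (∑ i ∈ Finset.range N, φ i p.1 p.2.1 p.2.2)|
                ≤ ((⋃ n, B' n) \ P N).indicator (fun _ => (1:ℝ≥0∞)) p
                  + ∑ i ∈ Finset.range N,
                      ENNReal.ofReal |(B' i).indicator (fun _ => (1:ℝ)) p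
                        - φ i p.1 p.2.1 p.2.2| := by
            intro p
            have e1 := abs_sub_clamp01 (indicator_one_mem (⋃ n, B' n) p)
              (∑ i ∈ Finset.range N, φ i p.1 p.2.1 p.2.2)
            have e2 := abs_sub_le ((⋃ n, B' n).indicator (fun _ => (1:ℝ)) p)
              ((P N).indicator (fun _ => (1:ℝ)) p)
              (∑ i ∈ Finset.range N, φ i p.1 p.2.1 p.2.2)
            have e3 : |(P N).indicator (fun _ => (1:ℝ)) p
                - ∑ i ∈ Finset.range N, φ i p.1 p.2.1 p.2.2|
                ≤ ∑ i ∈ Finset.range N,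
                    |(B' i).indicator (fun _ => (1:ℝ)) p - φ i p.1 p.2.1 p.2.2| := by
              simp only [hP]
              rw [indicator_biUnion_sum B' hd N p, ← Finset.sum_sub_distrib]
              exact Finset.abs_sum_le_sum_abs _ _
            have e4 : ENNReal.ofReal |(⋃ n, B' n).indicator (fun _ => (1:ℝ)) p
                - (P N).indicator (fun _ => (1:ℝ)) p|
                = ((⋃ n, B' n) \ P N).indicator (fun _ => (1:ℝ≥0∞)) p := by
              by_cases h1 : p ∈ P N
              · have h2 : p ∈ ⋃ n, B' n := hPsub N h1
                simp [Set.indicator_apply, h1, h2]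
              · by_cases h2 : p ∈ ⋃ n, B' n <;> simp [Set.indicator_apply, h1, h2]
            calc ENNReal.ofReal |(⋃ n, B' n).indicator (fun _ => (1:ℝ)) p
                  - clamp01 (∑ i ∈ Finset.range N, φ i p.1 p.2.1 p.2.2)|
                ≤ ENNReal.ofReal (|(⋃ n, B' n).indicator (fun _ => (1:ℝ)) p
                    - (P N).indicator (fun _ => (1:ℝ)) p|
                    + ∑ i ∈ Finset.range N,
                        |(B' i).indicator (fun _ => (1:ℝ)) p - φ i p.1 p.2.1 p.2.2|) :=
                  ENNReal.ofReal_le_ofReal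
                    (e1.trans (e2.trans (add_le_add le_rfl e3)))
              _ ≤ ENNReal.ofReal |(⋃ n, B' n).indicator (fun _ => (1:ℝ)) p
                    - (P N).indicator (fun _ => (1:ℝ)) p|
                  + ENNReal.ofReal (∑ i ∈ Finset.range N,
                      |(B' i).indicator (fun _ => (1:ℝ)) p - φ i p.1 p.2.1 p.2.2|) :=
                  ENNReal.ofReal_add_le
              _ = ((⋃ n, B' n) \ P N).indicator (fun _ => (1:ℝ≥0∞)) p
                  + ∑ i ∈ Finset.range N,
                      ENNReal.ofReal |(B' i).indicator (fun _ => (1:ℝ)) p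
                        - φ i p.1 p.2.1 p.2.2| := by
                  rw [e4, ENNReal.ofReal_sum_of_nonneg (fun i _ => abs_nonneg _)]
          calc (∫⁻ p, ENNReal.ofReal |(⋃ n, B' n).indicator (fun _ => (1:ℝ)) p
                  - clamp01 (∑ i ∈ Finset.range N, φ i p.1 p.2.1 p.2.2)| ∂ν)
              ≤ ∫⁻ p, (((⋃ n, B' n) \ P N).indicator (fun _ => (1:ℝ≥0∞)) p
                  + ∑ i ∈ Finset.range N,
                      ENNReal.ofReal |(B' i).indicator (fun _ => (1:ℝ)) p
                        - φ i p.1 p.2.1 p.2.2|) ∂ν := lintegral_mono hptw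
            _ = ν ((⋃ n, B' n) \ P N)
                + ∑ i ∈ Finset.range N,
                    ∫⁻ p, ENNReal.ofReal |(B' i).indicator (fun _ => (1:ℝ)) p
                      - φ i p.1 p.2.1 p.2.2| ∂ν := by
                rw [lintegral_add_left
                  (measurable_const.indicator ((MeasurableSet.iUnion hB'm).diff (hPmeas N))),
                  lintegral_indicator ((MeasurableSet.iUnion hB'm).diff (hPmeas N)),
                  lintegral_finset_sum (f := fun i p => ENNReal.ofReal |(B' i).indicator (fun _ => (1:ℝ)) p
                      - φ i p.1 p.2.1 p.2.2|) _ (fun i _ =>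
                    ((measurable_const.indicator (hB'm i)).sub (hm i)).abs.ennreal_ofReal)]
                simp
            _ < δ' / 2 + δ' / 2 := by
                refine ENNReal.add_lt_add hN ?_
                refine lt_of_lt_of_le (ENNReal.sum_lt_sum_of_nonempty
                  ⟨0, Finset.mem_range.mpr hNpos⟩ (fun i _ => hi i)) ?_
                rw [Finset.sum_const, Finset.card_range, nsmul_eq_mul, hη,
                  ENNReal.mul_div_cancel (by exact_mod_cast hNpos.ne') (ENNReal.natCast_ne_top N)]
            _ = δ' := ENNReal.add_halves δ'
  exact main hB δ hδ hδtop

end GoodApprox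

/-- approximation of indicators of product-measurable sets by functions
which are continuous in `(t,x)`, in `L¹(f_t(dx) μ|_A(dz) dt)`. -/
theorem stmt15 {d : ℕ} {E : Type*} [MeasurableSpace E] (μ : Measure E) [SigmaFinite μ]
    (T : ℝ) (hT : 0 < T)
    (f : ℝ → Measure (Vec d)) (hfmeas : MeasFamily T f)
    (hfprob : ∀ t ∈ Icc (0:ℝ) T, IsProbabilityMeasure (f t))
    (A : Set E) (hA : MeasurableSet A) (hAfin : μ A < ⊤)
    (S : Set (ℝ × E × Vec d)) (hS : MeasurableSet S) (ε : ℝ) (hε : 0 < ε) :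
    ∃ φ : ℝ → E → Vec d → ℝ,
      (Measurable fun p : ℝ × E × Vec d => φ p.1 p.2.1 p.2.2) ∧
      (∀ z : E, Continuous fun p : ℝ × Vec d => φ p.1 z p.2) ∧
      (∫ t in (0:ℝ)..T, ∫ z in A, ∫ x,
          |S.indicator (fun _ => (1:ℝ)) (t, z, x) - φ t z x| ∂(f t) ∂μ) < ε := by
  classical
  -- the "regularized" kernel family, extended to all of `ℝ`
  set g : ℝ → Measure (Vec d) := fun t => f (Set.projIcc 0 T hT.le t) with hgdef
  have hgm : Measurable g :=
    Measure.measurable_of_measurable_coe _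
      (fun s hs => (hfmeas s hs).comp continuous_projIcc.measurable)
  have hgprob : ∀ t, IsProbabilityMeasure (g t) :=
    fun t => hfprob _ (Set.projIcc 0 T hT.le t).2
  have hgf : ∀ t ∈ Icc (0:ℝ) T, g t = f t := by
    intro t ht
    show f ↑(Set.projIcc 0 T hT.le t) = f t
    rw [Set.projIcc_of_mem hT.le ht]
  set κ : ProbabilityTheory.Kernel (ℝ × E) (Vec d) :=
    ⟨fun p => g p.1, hgm.comp measurable_fst⟩ with hκ
  haveI : ProbabilityTheory.IsMarkovKernel κ := ⟨fun p => hgprob p.1⟩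
  haveI hfin1 : IsFiniteMeasure (volume.restrict (Ioc (0:ℝ) T)) :=
    ⟨by rw [Measure.restrict_apply_univ]; exact measure_Ioc_lt_top⟩
  haveI hfin2 : IsFiniteMeasure (μ.restrict A) :=
    ⟨by rw [Measure.restrict_apply_univ]; exact hAfin⟩
  set ρ : Measure (ℝ × E) := (volume.restrict (Ioc (0:ℝ) T)).prod (μ.restrict A) with hρ
  set ν : Measure ((ℝ × E) × Vec d) := ρ.compProd κ with hν
  set e : (ℝ × E) × Vec d ≃ᵐ ℝ × E × Vec d :=
    MeasurableEquiv.prodAssoc (α := ℝ) (β := E) (γ := Vec d) with he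
  set ν' : Measure (ℝ × E × Vec d) := ν.map e with hν'
  haveI : IsFiniteMeasure ν' := by
    rw [hν']
    exact Measure.isFiniteMeasure_map ν e
  obtain ⟨φ, hφm, hφc, hφ01, hφint⟩ := goodApprox ν' hS
    (δ := ENNReal.ofReal ε) (ENNReal.ofReal_pos.mpr hε).ne'
  refine ⟨φ, hφm, hφc, ?_⟩
  set F : ℝ × E × Vec d → ℝ≥0∞ :=
    fun p => ENNReal.ofReal |S.indicator (fun _ => (1:ℝ)) p - φ p.1 p.2.1 p.2.2| with hF
  have hFm : Measurable F := ((measurable_const.indicator hS).sub hφm).abs.ennreal_ofReal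
  have hF1 : ∀ p, F p ≤ 1 := fun p =>
    ENNReal.ofReal_le_one.mpr (abs_indicator_sub_le_one (hφ01 _ _ _))
  have hFe : Measurable fun q : (ℝ × E) × Vec d => F (q.1.1, q.1.2, q.2) :=
    hFm.comp (measurable_fst.fst.prodMk (measurable_fst.snd.prodMk measurable_snd))
  have hLm : Measurable fun r : ℝ × E => ∫⁻ x, F (r.1, r.2, x) ∂(g r.1) :=
    Measurable.lintegral_kernel_prod_right (κ := κ) (f := fun r x => F (r.1, r.2, x)) hFe
  have hL1 : ∀ r : ℝ × E, (∫⁻ x, F (r.1, r.2, x) ∂(g r.1)) ≤ 1 := by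
    intro r
    calc (∫⁻ x, F (r.1, r.2, x) ∂(g r.1)) ≤ ∫⁻ _, 1 ∂(g r.1) :=
          lintegral_mono fun x => hF1 _
      _ = 1 := by haveI := hgprob r.1; simp
  set M : ℝ → ℝ≥0∞ := fun t => ∫⁻ z in A, ∫⁻ x, F (t, z, x) ∂(g t) ∂μ with hM
  have hMm : Measurable M :=
    Measurable.lintegral_prod_right'
      (f := fun r : ℝ × E => ∫⁻ x, F (r.1, r.2, x) ∂(g r.1)) hLm
  have hMle : ∀ t, M t ≤ μ A := by
    intro t
    calc M t ≤ ∫⁻ _ in A, 1 ∂μ := lintegral_mono fun z => hL1 (t, z)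
      _ = μ A := setLIntegral_one A
  have key : (∫⁻ p, F p ∂ν') = ∫⁻ t in Ioc (0:ℝ) T, M t := by
    rw [hν']
    calc (∫⁻ p, F p ∂(ν.map e)) = ∫⁻ q, F (e q) ∂ν := lintegral_map_equiv F e
      _ = ∫⁻ r, ∫⁻ x, F (e (r, x)) ∂(κ r) ∂ρ :=
          Measure.lintegral_compProd (hFm.comp e.measurable)
      _ = ∫⁻ t in Ioc (0:ℝ) T, M t := lintegral_prod _ hLm.aemeasurable
  rw [intervalIntegral.integral_of_le hT.le]
  have step1 : ∀ t ∈ Ioc (0:ℝ) T,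
      (∫ z in A, ∫ x, |S.indicator (fun _ => (1:ℝ)) (t, z, x) - φ t z x| ∂(f t) ∂μ)
        = (M t).toReal := by
    intro t ht
    have hgt : f t = g t := (hgf t (Ioc_subset_Icc_self ht)).symm
    have inner : ∀ z, (∫ x, |S.indicator (fun _ => (1:ℝ)) (t, z, x) - φ t z x| ∂(f t))
        = (∫⁻ x, F (t, z, x) ∂(g t)).toReal := by
      intro z
      have hasm : AEStronglyMeasurable
          (fun x : Vec d => |S.indicator (fun _ => (1:ℝ)) (t, z, x) - φ t z x|) (g t) := by
        exact (((measurable_const.indicator hS).sub hφm).abs.comp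
          (measurable_prodMk_left.comp measurable_prodMk_left)).aestronglyMeasurable
      rw [hgt, integral_eq_lintegral_of_nonneg_ae (ae_of_all _ fun x => abs_nonneg _) hasm]
    calc (∫ z in A, ∫ x, |S.indicator (fun _ => (1:ℝ)) (t, z, x) - φ t z x| ∂(f t) ∂μ)
        = ∫ z in A, (∫⁻ x, F (t, z, x) ∂(g t)).toReal ∂μ :=
          integral_congr_ae (ae_of_all _ fun z => inner z)
      _ = (M t).toReal :=
          integral_toReal ((hLm.comp measurable_prodMk_left).aemeasurable)
            (ae_of_all _ fun z => lt_of_le_of_lt (hL1 (t, z)) ENNReal.one_lt_top)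
  rw [setIntegral_congr_fun measurableSet_Ioc step1]
  rw [integral_toReal hMm.aemeasurable
    (ae_of_all _ fun t => lt_of_le_of_lt (hMle t) hAfin)]
  rw [← key]
  exact ENNReal.toReal_lt_of_lt_ofReal hφint


end
end
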